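/- Let (Υ,μ) be a probability space, let k and M be positive integers, and let 0 = s₀ ≤ s₁ ≤ … ≤ s_k ≤ s_{k+1} = M be integers. Let {ξ_i^j : 0 ≤ i ≤ k, 0 ≤ j ≤ k} be mutually independent random blocks, where each ξ_i^j is distributed as μ^{⊗(s_{i+1}−s_i)} (a block of s_{i+1}−s_i i.i.d. μ-samples). For 0 ≤ ℓ ≤ k define Ψ^ℓ ∈ Υ^M as the concatenation Ψ^ℓ = (ξ_0^{m(ℓ,0)}, ξ_1^{m(ℓ,1)}, …, ξ_k^{m(ℓ,k)}) where m(ℓ,i) = max(ℓ−i, 0); in particular each Ψ^ℓ is distributed as μ^{⊗M}. Then for every measurable function f : Υ^M → [0,1], E[Π_{ℓ=0}^k f(Ψ^ℓ)] ≥ (∫ f dμ^{⊗M})^{k+1}. -/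

import Mathlib

open MeasureTheory Finset Filter ProbabilityTheory

universe u

/-! ## k-SAT basics -/

/-- A `k`-SAT formula on `n` variables with `m` clauses: each clause is an ordered
`k`-tuple of literals, a literal being a pair (variable index, polarity). -/
abbrev Formula (n m k : ℕ) := Fin m → Fin k → Fin n × Bool

/-- An assignment satisfies a clause if some literal of the clause is satisfied. -/
def satClause {n k : ℕ} (x : Fin n → Bool) (C : Fin k → Fin n × Bool) : Prop :=
  ∃ j : Fin k, x (C j).1 = (C j).2

/-- Normalized Hamming distance. -/
noncomputable def hamΔ {n : ℕ} {α : Type*} (x y : Fin n → α) : ℝ :=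
  (Nat.card {i : Fin n // x i ≠ y i} : ℝ) / n

/-- `x` ν-satisfies `Φ` if it satisfies at least `(1-ν)m` clauses. -/
def nuSat {n m k : ℕ} (x : Fin n → Bool) (Φ : Formula n m k) (ν : ℝ) : Prop :=
  (1 - ν) * m ≤ (Nat.card {i : Fin m // satClause x (Φ i)} : ℝ)

/-- `x ∈ {T,F,err}^n` (η,ν)-satisfies `Φ` (`none` is the error symbol). -/
def etaNuSat {n m k : ℕ} (x : Fin n → Option Bool) (Φ : Formula n m k) (η ν : ℝ) : Prop :=
  ∃ y : Fin n → Bool, hamΔ x (fun i => some (y i)) ≤ η ∧ nuSat y Φ ν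

/-! ## polynomials and solving -/

/-- Index set for the one-hot encoding of a formula, of cardinality `N = 2knm`. -/
abbrev Coords (n m k : ℕ) := Fin m × Fin k × (Fin n × Bool)

/-- One-hot encoding of a formula as a vector in `ℝ^N`. -/
def encode {n m k : ℕ} (Φ : Formula n m k) : Coords n m k → ℝ :=
  fun p => if Φ p.1 p.2.1 = p.2.2 then 1 else 0

/-- `g` agrees with a real multivariate polynomial of total degree at most `D`. -/
def IsPolyDeg {σ : Type*} (D : ℕ) (g : (σ → ℝ) → ℝ) : Prop :=
  ∃ p : MvPolynomial σ ℝ, p.totalDegree ≤ D ∧ ∀ x, g x = MvPolynomial.eval x p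

/-- `f : ℝ^N → ℝ^n` is a (deterministic) degree-`D` polynomial. -/
def IsDegPoly (n m k D : ℕ) (f : (Coords n m k → ℝ) → Fin n → ℝ) : Prop :=
  ∀ i : Fin n, IsPolyDeg D (fun x => f x i)

open Classical in
/-- The rounding map: `T` if `x ≥ 1`, `F` if `x ≤ -1`, `err` otherwise. -/
noncomputable def roundR (x : ℝ) : Option Bool :=
  if 1 ≤ x then some true else if x ≤ -1 then some false else none

/-- Expectation over a uniformly random formula. -/
noncomputable def Eform (n m k : ℕ) (g : Formula n m k → ℝ) : ℝ :=
  (∑ Φ : Formula n m k, g Φ) / (Fintype.card (Formula n m k) : ℝ)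

open Classical in
/-- Probability over a uniformly random formula. -/
noncomputable def Pform (n m k : ℕ) (A : Formula n m k → Prop) : ℝ :=
  Eform n m k (fun Φ => if A Φ then 1 else 0)

/-- A deterministic degree-`D` polynomial `(δ,γ,η,ν)`-solves random `k`-SAT. -/
def DetSolves (n m k D : ℕ) (f : (Coords n m k → ℝ) → Fin n → ℝ) (δ γ η ν : ℝ) : Prop :=
  IsDegPoly n m k D f ∧
  1 - δ ≤ Pform n m k (fun Φ => etaNuSat (fun i => roundR (f (encode Φ) i)) Φ η ν) ∧
  Eform n m k (fun Φ => ∑ i, (f (encode Φ) i) ^ 2) ≤ γ * n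

/-- A random degree-`D` polynomial `(δ,γ,η,ν)`-solves random `k`-SAT: `μ` is a
probability measure, every slice is a degree-`D` polynomial with coefficients
measurable in `ω`, and the success-probability and normalization conditions hold. -/
def RandomSolves (n m k D : ℕ) {Ω : Type u} [MeasurableSpace Ω] (μ : Measure Ω)
    (f : (Coords n m k → ℝ) → Ω → Fin n → ℝ) (δ γ η ν : ℝ) : Prop :=
  IsProbabilityMeasure μ ∧
  (∀ ω : Ω, IsDegPoly n m k D (fun x => f x ω)) ∧
  (∀ (x : Coords n m k → ℝ) (i : Fin n), Measurable (fun ω => f x ω i)) ∧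
  (∀ Φ : Formula n m k, Integrable (fun ω => ∑ i, (f (encode Φ) ω i) ^ 2) μ) ∧
  1 - δ ≤ Eform n m k (fun Φ =>
      (μ {ω | etaNuSat (fun i => roundR (f (encode Φ) ω i)) Φ η ν}).toReal) ∧
  Eform n m k (fun Φ => ∫ ω, (∑ i, (f (encode Φ) ω i) ^ 2) ∂μ) ≤ γ * n

/-! ## κ* -/

noncomputable def iota (β : ℝ) : ℝ := β / (1 - β * Real.exp (-(β - 1)))

noncomputable def kappaStar : ℝ := sInf (iota '' Set.Ioi 1)

/-! ## overlap profiles and entropies -/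

/-- Binary entropy function (natural log, with `0·log 0 = 0`). -/
noncomputable def Hb (p : ℝ) : ℝ := Real.negMulLog p + Real.negMulLog (1 - p)

/-- Number of coordinates whose agreement pattern is exactly `σ`. -/
noncomputable def patCount {n ℓ : ℕ} (Y : Fin ℓ → Fin n → Bool) (σ : Fin ℓ → Bool) : ℕ :=
  Nat.card {i : Fin n // ∀ t, Y t i = σ t}

/-- Entry of the overlap profile indexed by the unordered partition `{σ⁻¹(T), σ⁻¹(F)}`. -/
noncomputable def profFrac {n ℓ : ℕ} (Y : Fin ℓ → Fin n → Bool) (σ : Fin ℓ → Bool) : ℝ :=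
  ((patCount Y σ : ℝ) + (patCount Y (fun t => !(σ t)) : ℝ)) / n

/-- Overlap entropy `H(π(Y))` (each unordered partition is counted twice in the sum,
hence the factor `1/2`; valid for `ℓ ≥ 1` assignments). -/
noncomputable def overlapEntropy {n ℓ : ℕ} (Y : Fin ℓ → Fin n → Bool) : ℝ :=
  (1/2) * ∑ σ : Fin ℓ → Bool, Real.negMulLog (profFrac Y σ)

/-- The fraction `λ_{S,T}` of coordinates in the agreement set at which `x` is true. -/
noncomputable def lamFrac {n ℓ : ℕ} (x : Fin n → Bool) (Y : Fin ℓ → Fin n → Bool)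
    (σ : Fin ℓ → Bool) : ℝ :=
  (Nat.card {i : Fin n // ((∀ t, Y t i = σ t) ∨ (∀ t, Y t i = !(σ t))) ∧ x i = true} : ℝ)
    / ((patCount Y σ : ℝ) + (patCount Y (fun t => !(σ t)) : ℝ))

/-- Conditional overlap entropy `H(π(x | Y))`. -/
noncomputable def condOverlapEntropy {n ℓ : ℕ} (x : Fin n → Bool)
    (Y : Fin ℓ → Fin n → Bool) : ℝ :=
  (1/2) * ∑ σ : Fin ℓ → Bool, profFrac Y σ * Hb (lamFrac x Y σ)

/-- `H(π(y^ℓ | y^0, …, y^{ℓ-1}))` for an `ℕ`-indexed family of assignments. -/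
noncomputable def condH {n : ℕ} (y : ℕ → Fin n → Bool) (ℓ : ℕ) : ℝ :=
  condOverlapEntropy (y ℓ) (fun t : Fin ℓ => y (t : ℕ))

/-- `H(π(y^0, …, y^k))`. -/
noncomputable def ovH {n : ℕ} (y : ℕ → Fin n → Bool) (k : ℕ) : ℝ :=
  overlapEntropy (fun t : Fin (k+1) => y (t : ℕ))

/-- The energy term `E_{I ~ unif([n]^k)} |{y^ℓ[I] : 0 ≤ ℓ ≤ k}|`. -/
noncomputable def energy {n : ℕ} (k : ℕ) (y : ℕ → Fin n → Bool) : ℝ :=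
  (∑ I : Fin k → Fin n,
      (((Finset.range (k+1)).image (fun ℓ => fun r => y ℓ (I r))).card : ℝ))
    / (Fintype.card (Fin k → Fin n) : ℝ)

/-- Conditional overlap entropies of `y^1, …, y^k` within `[β₋ log k / k, β₊ log k / k]`. -/
def Admissible {n : ℕ} (k : ℕ) (βm βp : ℝ) (y : ℕ → Fin n → Bool) : Prop :=
  ∀ ℓ, 1 ≤ ℓ → ℓ ≤ k →
    condH y ℓ ∈ Set.Icc (βm * Real.log k / k) (βp * Real.log k / k)

/-! ## the interpolation path -/

/-- The interpolation path: step `t+1` resamples the literal at lexicographic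
position `t % (km)` (0-indexed: clause `(t % km)/k`, position `(t % km) % k`)
to the value `w ⟨t, _⟩`. -/
def interpPath {n m k T : ℕ} (Φ0 : Formula n m k) (w : Fin T → Fin n × Bool) :
    ℕ → Formula n m k
  | 0 => Φ0
  | t + 1 => fun a b =>
      if h : t < T ∧ (a : ℕ) = t % (k * m) / k ∧ (b : ℕ) = t % (k * m) % k
      then w ⟨t, h.1⟩
      else interpPath Φ0 w t a b

open Classical in
/-- Probability of an event of the interpolation path `Φ^(0), …, Φ^(T)`, where
`Φ^(0)` is uniform and all resampled literals are i.i.d. uniform. -/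
noncomputable def Ppath (n m k T : ℕ) (A : (ℕ → Formula n m k) → Prop) : ℝ :=
  (∑ z : Formula n m k × (Fin T → Fin n × Bool),
      if A (interpPath z.1 z.2) then (1:ℝ) else 0)
    / (Fintype.card (Formula n m k × (Fin T → Fin n × Bool)) : ℝ)

/-! ## stability of low-degree polynomials -/

/-- The pair `(Φ, Φ')` is `c`-bad with respect to `f`. -/
def cBad {n m k : ℕ} (f : (Coords n m k → ℝ) → Fin n → ℝ) (c : ℝ)
    (Φ Φ' : Formula n m k) : Prop :=
  c * Eform n m k (fun Ψ => ∑ i, (f (encode Ψ) i) ^ 2) <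
    ∑ i, (f (encode Φ) i - f (encode Φ') i) ^ 2

/-- Replace the literal of `Φ` in clause `a`, position `b`, by `L`. -/
def updLit {n m k : ℕ} (Φ : Formula n m k) (a : Fin m) (b : Fin k)
    (L : Fin n × Bool) : Formula n m k :=
  fun i j => if i = a ∧ j = b then L else Φ i j

open Classical in
/-- `λ_j`: the probability that resampling the literal at clause `a`, position `b`
(uniformly among the `2n-1` other literals) produces a `c`-bad pair. -/
noncomputable def lambdaPos {n m k : ℕ} (f : (Coords n m k → ℝ) → Fin n → ℝ) (c : ℝ)
    (a : Fin m) (b : Fin k) : ℝ :=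
  (∑ Φ : Formula n m k, ∑ L : Fin n × Bool,
      if L ≠ Φ a b ∧ cBad f c Φ (updLit Φ a b L) then (1:ℝ) else 0)
    / ((Fintype.card (Formula n m k) : ℝ) * (2 * (n:ℝ) - 1))

/-! ## the p/q quantities of the energy analysis -/

/-- The history vector `y^{≤j}_i = (y^1_i, …, y^j_i)`. -/
def hist {n : ℕ} (y : ℕ → Fin n → Bool) (j : ℕ) (i : Fin n) : Fin j → Bool :=
  fun t => y ((t : ℕ) + 1) i

/-- `φ_ℓ(b | ξ) = P_{i ~ unif([n])}[y^ℓ_i = b | y^{≤ℓ-1}_i = ξ]`. -/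
noncomputable def phi {n : ℕ} (y : ℕ → Fin n → Bool) (ℓ : ℕ) (b : Bool)
    (ξ : Fin (ℓ - 1) → Bool) : ℝ :=
  (Nat.card {i : Fin n // y ℓ i = b ∧ hist y (ℓ - 1) i = ξ} : ℝ) /
    (Nat.card {i : Fin n // hist y (ℓ - 1) i = ξ} : ℝ)

open Classical in
/-- `p_ℓ(σ) = P_{I ~ unif([n]^k)}[y^{ℓ'}[I] = σ for some 0 ≤ ℓ' ≤ ℓ]`. -/
noncomputable def pP {n : ℕ} (k : ℕ) (y : ℕ → Fin n → Bool) (ℓ : ℕ)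
    (σ : Fin k → Bool) : ℝ :=
  (∑ I : Fin k → Fin n, if ∃ ℓ' ≤ ℓ, ∀ r, y ℓ' (I r) = σ r then (1:ℝ) else 0)
    / (Fintype.card (Fin k → Fin n) : ℝ)

open Classical in
/-- `Q_ℓ(σ, I)`: the truncated conditional probability that `y^ℓ[I] = σ`. -/
noncomputable def Qfun {n k : ℕ} (y : ℕ → Fin n → Bool) (ℓ : ℕ) (σ : Fin k → Bool)
    (I : Fin k → Fin n) : ℝ :=
  if (∏ r, phi y ℓ (σ r) (hist y (ℓ - 1) (I r))) ≤ 1 / ((k:ℝ) * Real.log k)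
  then ∏ r, phi y ℓ (σ r) (hist y (ℓ - 1) (I r)) else 0

/-- `q_ℓ(σ) = E_{I ~ unif([n]^k)}[Q_ℓ(σ, I)]`. -/
noncomputable def qfun {n k : ℕ} (y : ℕ → Fin n → Bool) (ℓ : ℕ) (σ : Fin k → Bool) : ℝ :=
  (∑ I : Fin k → Fin n, Qfun y ℓ σ I) / (Fintype.card (Fin k → Fin n) : ℝ)

/-! ## lazy random walk on a product graph -/

/-- Lazy random walk on `Σ^J`: step `t+1` resamples coordinate `σ (t+1)` to `u ⟨t, _⟩`. -/
def walk {S : Type u} {J : Type*} [DecidableEq J] {T : ℕ} (v0 : J → S) (σ : ℕ → J)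
    (u : Fin T → S) : ℕ → (J → S)
  | 0 => v0
  | t + 1 => if h : t < T then Function.update (walk v0 σ u t) (σ (t+1)) (u ⟨t, h⟩)
             else walk v0 σ u t

open Classical in
/-- `λ_j`: fraction of edges in direction `j` that are bad. -/
noncomputable def lambdaDir {S : Type u} [Fintype S] {J : ℕ}
    (B : (Fin J → S) → (Fin J → S) → Prop) (j : Fin J) : ℝ :=
  (∑ v : Fin J → S, ∑ s : S,
      if s ≠ v j ∧ B v (Function.update v j s) then (1:ℝ) else 0)
    / ((Fintype.card (Fin J → S) : ℝ) * ((Fintype.card S : ℝ) - 1))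

open Classical in
/-- Probability that no step of the lazy random walk traverses a bad edge. -/
noncomputable def PwalkGood {S : Type u} [Fintype S] (J T : ℕ)
    (B : (Fin J → S) → (Fin J → S) → Prop) (σ : ℕ → Fin J) : ℝ :=
  (∑ z : (Fin J → S) × (Fin T → S),
      if ∀ t, 1 ≤ t → t ≤ T →
          (walk z.1 σ z.2 t = walk z.1 σ z.2 (t-1) ∨
           ¬ B (walk z.1 σ z.2 (t-1)) (walk z.1 σ z.2 t))
      then (1:ℝ) else 0)
    / (Fintype.card ((Fin J → S) × (Fin T → S)) : ℝ)

/-! ## block interpolation -/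

/-- The index `i` of the segment `[s_i, s_{i+1})` containing `r`. -/
def psiIdx (s : ℕ → ℕ) (k r : ℕ) : ℕ := Nat.findGreatest (fun i => s i ≤ r) k

/-- `Ψ^ℓ`: concatenation of the blocks `ξ_i^{max(ℓ-i,0)}`, realized on the canonical
product space of `(k+1)²` independent `μ^{⊗M}`-samples. -/
def Psi {Υ : Type u} (s : ℕ → ℕ) (k M : ℕ)
    (ω : Fin (k+1) × Fin (k+1) → Fin M → Υ) (ℓ : ℕ) : Fin M → Υ :=
  fun r => ω (⟨min (psiIdx s k (r : ℕ)) k, by omega⟩,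
              ⟨min (ℓ - psiIdx s k (r : ℕ)) k, by omega⟩) r


namespace S19

open Function Set

variable {Υ : Type u} [MeasurableSpace Υ]

/-- merge: take `u` below threshold `a`, `x` above. -/
def merge {M : ℕ} (a : ℕ) (u x : Fin M → Υ) : Fin M → Υ :=
  fun r => if (r : ℕ) < a then u r else x r

lemma merge_zero {M : ℕ} (u x : Fin M → Υ) : merge 0 u x = x := by
  funext r; simp [merge]

lemma merge_merge {M : ℕ} {a b : ℕ} (hba : b ≤ a) (v u x : Fin M → Υ) :
    merge b v (merge a u x) = merge a (merge b v u) x := by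
  funext r; simp only [merge]; split_ifs with h1 h2 h2 <;> first | rfl | omega

lemma merge_high {M : ℕ} {a c : ℕ} (hac : a ≤ c) (v u x : Fin M → Υ) :
    merge c v (merge a u x) = merge c v x := by
  funext r; simp only [merge]; split_ifs with h1 h2 <;> first | rfl | omega

lemma measurable_merge {M : ℕ} (a : ℕ) :
    Measurable (fun p : (Fin M → Υ) × (Fin M → Υ) => merge a p.1 p.2) := by
  apply measurable_pi_lambda; intro r
  by_cases h : (r : ℕ) < a <;> simp only [merge, h, if_true, if_false]
  · exact (measurable_pi_apply r).comp measurable_fst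
  · exact (measurable_pi_apply r).comp measurable_snd

lemma int01 {α : Type*} [MeasurableSpace α] (ρ : Measure α) [IsFiniteMeasure ρ] {h : α → ℝ}
    (hm : Measurable h) (hb : ∀ y, h y ∈ Set.Icc (0:ℝ) 1) : Integrable h ρ := by
  refine Integrable.mono' (integrable_const 1) hm.aestronglyMeasurable (ae_of_all _ fun y => ?_)
  rw [Real.norm_eq_abs, abs_le]
  exact ⟨by linarith [(hb y).1], (hb y).2⟩

lemma mem01_pow {a : ℝ} (ha : a ∈ Set.Icc (0:ℝ) 1) (n : ℕ) : a ^ n ∈ Set.Icc (0:ℝ) 1 :=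
  ⟨pow_nonneg ha.1 n, pow_le_one₀ ha.1 ha.2⟩

lemma mem01_mul {a b : ℝ} (ha : a ∈ Set.Icc (0:ℝ) 1) (hb : b ∈ Set.Icc (0:ℝ) 1) :
    a * b ∈ Set.Icc (0:ℝ) 1 :=
  ⟨mul_nonneg ha.1 hb.1, mul_le_one₀ ha.2 hb.1 hb.2⟩

lemma mem01_prod {ι : Type*} (t : Finset ι) (a : ι → ℝ) (ha : ∀ i ∈ t, a i ∈ Set.Icc (0:ℝ) 1) :
    (∏ i ∈ t, a i) ∈ Set.Icc (0:ℝ) 1 :=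
  ⟨Finset.prod_nonneg fun i hi => (ha i hi).1,
   Finset.prod_le_one (fun i hi => (ha i hi).1) (fun i hi => (ha i hi).2)⟩

lemma jensen_pow {α : Type*} [MeasurableSpace α] (ρ : Measure α) [IsProbabilityMeasure ρ]
    {h : α → ℝ} (hm : Measurable h) (hb : ∀ y, h y ∈ Set.Icc (0:ℝ) 1) (n : ℕ) :
    (∫ y, h y ∂ρ) ^ n ≤ ∫ y, (h y) ^ n ∂ρ := by
  have := (convexOn_pow n).map_integral_le (μ := ρ) (f := h)
    (continuous_pow n).continuousOn isClosed_Ici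
    (ae_of_all _ fun y => (hb y).1) (int01 ρ hm hb)
    (int01 ρ (hm.pow_const n) (fun y => mem01_pow (hb y) n))
  exact this

/-- Jensen + merge-averaging: the merge of two independent `π`-samples is a `π`-sample. -/
lemma mp_merge {M : ℕ} (μ : Measure Υ) [IsProbabilityMeasure μ] (a : ℕ) :
    MeasurePreserving (fun p : (Fin M → Υ) × (Fin M → Υ) => merge a p.1 p.2)
      ((Measure.pi fun _ : Fin M => μ).prod (Measure.pi fun _ : Fin M => μ))
      (Measure.pi fun _ : Fin M => μ) := by
  refine ⟨measurable_merge a, ?_⟩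
  refine (Measure.pi_eq fun B hB => ?_).symm
  rw [Measure.map_apply (measurable_merge a) (MeasurableSet.univ_pi hB)]
  have hpre : (fun p : (Fin M → Υ) × (Fin M → Υ) => merge a p.1 p.2) ⁻¹' Set.pi Set.univ B =
      (Set.pi Set.univ fun r : Fin M => if (r : ℕ) < a then B r else Set.univ) ×ˢ
      (Set.pi Set.univ fun r : Fin M => if (r : ℕ) < a then Set.univ else B r) := by
    ext p
    simp only [Set.mem_preimage, Set.mem_pi, Set.mem_univ, forall_true_left, Set.mem_prod, merge]
    constructor
    · intro hp
      constructor <;> intro r <;> by_cases h : (r : ℕ) < a <;>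
        simp only [h, if_true, if_false, Set.mem_univ] <;> simpa [h] using hp r
    · rintro ⟨h1, h2⟩ r
      by_cases h : (r : ℕ) < a
      · simpa [h] using h1 r
      · simpa [h] using h2 r
  rw [hpre, Measure.prod_prod, Measure.pi_pi, Measure.pi_pi, ← Finset.prod_mul_distrib]
  refine Finset.prod_congr rfl fun r _ => ?_
  by_cases h : (r : ℕ) < a <;> simp [h]

/-- Reading map: if each output row reads a distinct input block (per inner coordinate),
the map is measure preserving between product-of-product spaces. -/
lemma mp_read {M : ℕ} (μ : Measure Υ) [IsProbabilityMeasure μ]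
    {A : Type*} [Fintype A] [DecidableEq A] {n : ℕ}
    (e : Fin n → Fin M → A) (he : ∀ r, Function.Injective fun ℓ => e ℓ r) :
    MeasurePreserving (fun (ω : A → Fin M → Υ) (ℓ : Fin n) (r : Fin M) => ω (e ℓ r) r)
      (Measure.pi fun _ : A => Measure.pi fun _ : Fin M => μ)
      (Measure.pi fun _ : Fin n => Measure.pi fun _ : Fin M => μ) := by
  classical
  have hmeas : Measurable (fun (ω : A → Fin M → Υ) (ℓ : Fin n) (r : Fin M) => ω (e ℓ r) r) := by
    apply measurable_pi_lambda; intro ℓ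
    apply measurable_pi_lambda; intro r
    exact (measurable_pi_apply r).comp (measurable_pi_apply (e ℓ r))
  refine ⟨hmeas, ?_⟩
  set π : Measure (Fin M → Υ) := Measure.pi fun _ : Fin M => μ with hπ
  refine (Measure.pi_eq_generateFrom (C := fun _ : Fin n =>
      Set.pi Set.univ '' Set.pi Set.univ fun _ : Fin M => {t : Set Υ | MeasurableSet t})
    (fun _ => generateFrom_pi) (fun _ => isPiSystem_pi) (fun _ =>
      ⟨fun _ => Set.univ,
       fun _ => ⟨fun _ => Set.univ, fun _ _ => MeasurableSet.univ, by simp⟩,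
       fun _ => by simp [hπ],
       by rw [Set.iUnion_const]⟩) ?_).symm
  intro S hS
  choose t ht hSt using hS
  have htm : ∀ ℓ r, MeasurableSet (t ℓ r) := fun ℓ r => ht ℓ r (Set.mem_univ r)
  have hSm : ∀ ℓ, MeasurableSet (S ℓ) := fun ℓ => by
    rw [← hSt ℓ]; exact MeasurableSet.univ_pi (htm ℓ)
  rw [Measure.map_apply hmeas (MeasurableSet.univ_pi hSm)]
  set D : A → Fin M → Set Υ := fun a r =>
    if h : ∃ ℓ, e ℓ r = a then t h.choose r else Set.univ with hD
  have hDm : ∀ a r, MeasurableSet (D a r) := by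
    intro a r; rw [hD]; dsimp only
    split_ifs with h
    · exact htm _ r
    · exact MeasurableSet.univ
  have hDe : ∀ (ℓ : Fin n) (r : Fin M), D (e ℓ r) r = t ℓ r := by
    intro ℓ r
    have h : ∃ ℓ', e ℓ' r = e ℓ r := ⟨ℓ, rfl⟩
    rw [hD]; dsimp only
    rw [dif_pos h, he r h.choose_spec]
  have hpre : (fun (ω : A → Fin M → Υ) (ℓ : Fin n) (r : Fin M) => ω (e ℓ r) r) ⁻¹'
      Set.pi Set.univ S = Set.pi Set.univ fun a => Set.pi Set.univ (D a) := by
    ext ω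
    simp only [Set.mem_preimage, Set.mem_pi, Set.mem_univ, forall_true_left]
    constructor
    · intro hω a r
      rw [hD]; dsimp only
      split_ifs with h
      · have h1 := hω h.choose
        rw [← hSt h.choose] at h1
        have h2 := h1 r (Set.mem_univ r)
        dsimp only at h2; rwa [h.choose_spec] at h2
      · exact Set.mem_univ _
    · intro hω ℓ
      rw [← hSt ℓ]
      intro r _
      have h2 := hω (e ℓ r) r
      rwa [hDe ℓ r] at h2
  rw [hpre, Measure.pi_pi]
  have lhs : ∏ a : A, π (Set.pi Set.univ (D a)) = ∏ a : A, ∏ r : Fin M, μ (D a r) := by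
    refine Finset.prod_congr rfl fun a _ => ?_
    rw [hπ, Measure.pi_pi]
  have rhs : ∀ ℓ : Fin n, π (S ℓ) = ∏ r : Fin M, μ (t ℓ r) := by
    intro ℓ; rw [← hSt ℓ, hπ, Measure.pi_pi]
  rw [lhs]
  simp only [rhs]
  have key : ∀ r : Fin M, ∏ a : A, μ (D a r) = ∏ ℓ : Fin n, μ (t ℓ r) := by
    intro r
    have h1 : ∏ a : A, μ (D a r) = ∏ ℓ : Fin n, μ (D (e ℓ r) r) := by
      rw [← Finset.prod_image (f := fun a => μ (D a r))
        (g := fun ℓ : Fin n => e ℓ r) (fun ℓ _ ℓ' _ h => he r h)]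
      refine (Finset.prod_subset (Finset.subset_univ _) fun a _ ha => ?_).symm
      have hna : ¬ ∃ ℓ, e ℓ r = a := by
        intro ⟨ℓ, hℓ⟩; exact ha (Finset.mem_image.2 ⟨ℓ, Finset.mem_univ ℓ, hℓ⟩)
      rw [hD]; dsimp only
      rw [dif_neg hna]
      simp
    rw [h1]
    exact Finset.prod_congr rfl fun ℓ _ => by rw [hDe]
  calc (∏ a : A, ∏ r : Fin M, μ (D a r)) = ∏ r : Fin M, ∏ a : A, μ (D a r) :=
        Finset.prod_comm
    _ = ∏ r : Fin M, ∏ ℓ : Fin n, μ (t ℓ r) := Finset.prod_congr rfl fun r _ => key r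
    _ = ∏ ℓ : Fin n, ∏ r : Fin M, μ (t ℓ r) := Finset.prod_comm

lemma smono {k : ℕ} {s : ℕ → ℕ} (hmono : ∀ i, i ≤ k → s i ≤ s (i + 1)) :
    ∀ i j, i ≤ j → j ≤ k + 1 → s i ≤ s j := by
  intro i j hij hjk
  induction j with
  | zero => have : i = 0 := by omega
            rw [this]
  | succ m ih =>
    rcases Nat.lt_or_ge i (m + 1) with h | h
    · exact le_trans (ih (by omega) (by omega)) (hmono m (by omega))
    · have : i = m + 1 := by omega
      rw [this]

section PartI

variable {M : ℕ} (μ : Measure Υ) [IsProbabilityMeasure μ]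

/-- Averaging a bounded measurable function over a fresh low block is the full average. -/
lemma avg_full (a : ℕ) {φ : (Fin M → Υ) → ℝ} (hφ : Measurable φ)
    (hφ01 : ∀ y, φ y ∈ Set.Icc (0:ℝ) 1) :
    ∫ x, ∫ u, φ (merge a u x) ∂(Measure.pi fun _ : Fin M => μ)
        ∂(Measure.pi fun _ : Fin M => μ) = ∫ y, φ y ∂(Measure.pi fun _ : Fin M => μ) := by
  set π : Measure (Fin M → Υ) := Measure.pi fun _ : Fin M => μ with hπ
  have hq : MeasurePreserving (fun p : (Fin M → Υ) × (Fin M → Υ) => merge a p.2 p.1)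
      (π.prod π) π := by
    have := (mp_merge μ a).comp (Measure.measurePreserving_swap (μ := π) (ν := π))
    exact this
  have hint : Integrable (fun p : (Fin M → Υ) × (Fin M → Υ) => φ (merge a p.2 p.1))
      (π.prod π) := int01 _ (hφ.comp hq.measurable) (fun p => hφ01 _)
  rw [MeasureTheory.integral_integral (f := fun x u => φ (merge a u x)) hint]
  have h2 := integral_map (μ := π.prod π)
    (φ := fun p : (Fin M → Υ) × (Fin M → Υ) => merge a p.2 p.1) (f := φ)
    hq.measurable.aemeasurable
    (hφ.aestronglyMeasurable (μ := Measure.map (fun p : (Fin M → Υ) × (Fin M → Υ) =>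
      merge a p.2 p.1) (π.prod π)))
  rw [hq.map_eq] at h2
  exact h2.symm

variable {f : (Fin M → Υ) → ℝ}

/-- `g` is measurable. -/
lemma g_meas (hf : Measurable f) (a : ℕ) :
    Measurable fun x => ∫ u, f (merge a u x) ∂(Measure.pi fun _ : Fin M => μ) := by
  have : StronglyMeasurable fun p : (Fin M → Υ) × (Fin M → Υ) => f (merge a p.1 p.2) :=
    (hf.comp (measurable_merge a)).stronglyMeasurable
  exact this.integral_prod_left'.measurable

lemma g_mem01 (hf : Measurable f) (hf01 : ∀ x, f x ∈ Set.Icc (0:ℝ) 1) (a : ℕ)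
    (x : Fin M → Υ) :
    (∫ u, f (merge a u x) ∂(Measure.pi fun _ : Fin M => μ)) ∈ Set.Icc (0:ℝ) 1 := by
  constructor
  · exact integral_nonneg fun u => (hf01 _).1
  · calc ∫ u, f (merge a u x) ∂(Measure.pi fun _ : Fin M => μ)
        ≤ ∫ _, (1:ℝ) ∂(Measure.pi fun _ : Fin M => μ) := by
          refine integral_mono (int01 _ (hf.comp ?_) fun u => hf01 _) (integrable_const 1)
            fun u => (hf01 _).2
          exact (measurable_merge a).comp (measurable_id.prodMk measurable_const)
      _ = 1 := by simp

/-- Averaging `g a` over a fresh block below `c ≥ a` gives `g c`. -/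
lemma avg_g (hf : Measurable f) (hf01 : ∀ x, f x ∈ Set.Icc (0:ℝ) 1) {a c : ℕ} (hac : a ≤ c)
    (x : Fin M → Υ) :
    ∫ u, (∫ v, f (merge a v (merge c u x)) ∂(Measure.pi fun _ : Fin M => μ))
        ∂(Measure.pi fun _ : Fin M => μ)
      = ∫ w, f (merge c w x) ∂(Measure.pi fun _ : Fin M => μ) := by
  set π : Measure (Fin M → Υ) := Measure.pi fun _ : Fin M => μ with hπ
  have hq : MeasurePreserving (fun p : (Fin M → Υ) × (Fin M → Υ) => merge a p.2 p.1)
      (π.prod π) π := by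
    have := (mp_merge μ a).comp (Measure.measurePreserving_swap (μ := π) (ν := π))
    exact this
  have hrw : ∀ u v : Fin M → Υ, merge a v (merge c u x) = merge c (merge a v u) x :=
    fun u v => merge_merge hac v u x
  simp_rw [hrw]
  have hint : Integrable (fun p : (Fin M → Υ) × (Fin M → Υ) => f (merge c (merge a p.2 p.1) x))
      (π.prod π) := by
    refine int01 _ (hf.comp ?_) fun p => hf01 _
    exact ((measurable_merge c).comp (hq.measurable.prodMk measurable_const))
  rw [MeasureTheory.integral_integral (f := fun u v => f (merge c (merge a v u) x)) hint]
  have h2 := integral_map (μ := π.prod π)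
    (φ := fun p : (Fin M → Υ) × (Fin M → Υ) => merge a p.2 p.1)
    (f := fun w => f (merge c w x))
    hq.measurable.aemeasurable
    ((hf.comp ((measurable_merge c).comp
      (measurable_id.prodMk measurable_const))).aestronglyMeasurable)
  rw [hq.map_eq] at h2
  exact h2.symm

/-- Part I: the chain inequality. -/
lemma partI (k : ℕ) (s : ℕ → ℕ) (hs0 : s 0 = 0) (hmono : ∀ i, i ≤ k → s i ≤ s (i + 1))
    (hf : Measurable f) (hf01 : ∀ x, f x ∈ Set.Icc (0:ℝ) 1) :
    (∫ x, f x ∂(Measure.pi fun _ : Fin M => μ)) ^ (k + 1) ≤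
      ∫ x, f x * ∏ ℓ ∈ Finset.Ioc 0 k,
          (∫ u, f (merge (s ℓ) u x) ∂(Measure.pi fun _ : Fin M => μ))
        ∂(Measure.pi fun _ : Fin M => μ) := by
  set π : Measure (Fin M → Υ) := Measure.pi fun _ : Fin M => μ with hπ
  set g : ℕ → (Fin M → Υ) → ℝ := fun t x => ∫ u, f (merge (s t) u x) ∂π with hg
  have hgm : ∀ t, Measurable (g t) := fun t => g_meas μ hf (s t)
  have hgb : ∀ t x, g t x ∈ Set.Icc (0:ℝ) 1 := fun t x => g_mem01 μ hf hf01 (s t) x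
  set A : ℕ → ℝ := fun t => ∫ x, (g t x) ^ (t + 1) * ∏ ℓ ∈ Finset.Ioc t k, g ℓ x ∂π with hA
  -- integrands for A are measurable and in [0,1]
  have hΦm : ∀ t, Measurable fun x => (g t x) ^ (t + 1) * ∏ ℓ ∈ Finset.Ioc t k, g ℓ x :=
    fun t => ((hgm t).pow_const _).mul (Finset.measurable_prod _ fun ℓ _ => hgm ℓ)
  have hΦb : ∀ t x, ((g t x) ^ (t + 1) * ∏ ℓ ∈ Finset.Ioc t k, g ℓ x) ∈ Set.Icc (0:ℝ) 1 :=
    fun t x => mem01_mul (mem01_pow (hgb t x) _)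
      (mem01_prod _ _ fun ℓ _ => hgb ℓ x)
  -- base case
  have hbase : (∫ x, f x ∂π) ^ (k + 1) ≤ A k := by
    have h1 : ∫ x, g k x ∂π = ∫ y, f y ∂π := by
      rw [hg]
      exact avg_full μ (s k) hf hf01
    have h2 : (∫ x, g k x ∂π) ^ (k + 1) ≤ ∫ x, (g k x) ^ (k + 1) ∂π :=
      jensen_pow π (hgm k) (hgb k) (k + 1)
    rw [h1] at h2
    refine le_trans h2 (le_of_eq ?_)
    rw [hA]
    simp
  -- step
  have hstep : ∀ t, t < k → A (t + 1) ≤ A t := by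
    intro t htk
    have hsc : s (t + 1) ≤ s (t + 1) := le_refl _
    -- A t as a double integral
    have h1 : A t = ∫ x, ∫ u, ((g t (merge (s (t+1)) u x)) ^ (t + 1) *
        ∏ ℓ ∈ Finset.Ioc t k, g ℓ (merge (s (t+1)) u x)) ∂π ∂π := by
      rw [hA]
      exact (avg_full μ (s (t+1)) (hΦm t) (hΦb t)).symm
    -- the product factors are invariant
    have hinv : ∀ (u x : Fin M → Υ) (ℓ : ℕ), ℓ ∈ Finset.Ioc t k →
        g ℓ (merge (s (t+1)) u x) = g ℓ x := by
      intro u x ℓ hℓ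
      rw [Finset.mem_Ioc] at hℓ
      have hle : s (t+1) ≤ s ℓ := smono hmono (t+1) ℓ hℓ.1 (by omega)
      rw [hg]
      dsimp only
      refine integral_congr_ae (ae_of_all _ fun v => ?_)
      simp only [merge_high hle]
    have h2 : A t = ∫ x, (∫ u, (g t (merge (s (t+1)) u x)) ^ (t + 1) ∂π) *
        ∏ ℓ ∈ Finset.Ioc t k, g ℓ x ∂π := by
      rw [h1]
      refine integral_congr_ae (ae_of_all _ fun x => ?_)
      have : ∀ u, ((g t (merge (s (t+1)) u x)) ^ (t + 1) *
          ∏ ℓ ∈ Finset.Ioc t k, g ℓ (merge (s (t+1)) u x)) =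
          (g t (merge (s (t+1)) u x)) ^ (t + 1) * ∏ ℓ ∈ Finset.Ioc t k, g ℓ x := by
        intro u
        congr 1
        exact Finset.prod_congr rfl fun ℓ hℓ => hinv u x ℓ hℓ
      simp_rw [this]
      exact integral_mul_const _ _
    -- measurability of the inner integral
    have hinm : Measurable fun x => ∫ u, (g t (merge (s (t+1)) u x)) ^ (t + 1) ∂π := by
      have : StronglyMeasurable fun p : (Fin M → Υ) × (Fin M → Υ) =>
          (g t (merge (s (t+1)) p.1 p.2)) ^ (t + 1) :=
        (((hgm t).comp (measurable_merge (s (t+1)))).pow_const _).stronglyMeasurable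
      exact this.integral_prod_left'.measurable
    have hinb : ∀ x, (∫ u, (g t (merge (s (t+1)) u x)) ^ (t + 1) ∂π) ∈ Set.Icc (0:ℝ) 1 := by
      intro x
      constructor
      · exact integral_nonneg fun u => (mem01_pow (hgb t _) _).1
      · calc ∫ u, (g t (merge (s (t+1)) u x)) ^ (t + 1) ∂π ≤ ∫ _, (1:ℝ) ∂π := by
              refine integral_mono (int01 _ ?_ fun u => mem01_pow (hgb t _) _)
                (integrable_const 1) fun u => (mem01_pow (hgb t _) _).2
              exact ((hgm t).comp ((measurable_merge (s (t+1))).comp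
                (measurable_id.prodMk measurable_const))).pow_const _
          _ = 1 := by simp
    -- pointwise Jensen bound for the inner integral
    have hpt : ∀ x, (g (t+1) x) ^ (t + 1) ≤ ∫ u, (g t (merge (s (t+1)) u x)) ^ (t + 1) ∂π := by
      intro x
      have hJ : (∫ u, g t (merge (s (t+1)) u x) ∂π) ^ (t + 1) ≤
          ∫ u, (g t (merge (s (t+1)) u x)) ^ (t + 1) ∂π := by
        refine jensen_pow π ?_ (fun u => hgb t _) (t + 1)
        exact (hgm t).comp ((measurable_merge (s (t+1))).comp
          (measurable_id.prodMk measurable_const))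
      have havg : ∫ u, g t (merge (s (t+1)) u x) ∂π = g (t+1) x := by
        rw [hg]
        exact avg_g μ hf hf01 (hmono t (by omega)) x
      rwa [havg] at hJ
    -- assemble
    have h3 : ∫ x, (g (t+1) x) ^ (t + 1) * ∏ ℓ ∈ Finset.Ioc t k, g ℓ x ∂π ≤
        ∫ x, (∫ u, (g t (merge (s (t+1)) u x)) ^ (t + 1) ∂π) *
          ∏ ℓ ∈ Finset.Ioc t k, g ℓ x ∂π := by
      refine integral_mono ?_ ?_ fun x => ?_
      · exact int01 _ (((hgm (t+1)).pow_const _).mul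
          (Finset.measurable_prod _ fun ℓ _ => hgm ℓ))
          fun x => mem01_mul (mem01_pow (hgb _ x) _) (mem01_prod _ _ fun ℓ _ => hgb ℓ x)
      · exact int01 _ (hinm.mul (Finset.measurable_prod _ fun ℓ _ => hgm ℓ))
          fun x => mem01_mul (hinb x) (mem01_prod _ _ fun ℓ _ => hgb ℓ x)
      · exact mul_le_mul_of_nonneg_right (hpt x)
          (mem01_prod _ _ fun ℓ _ => hgb ℓ x).1
    have h4 : A (t+1) = ∫ x, (g (t+1) x) ^ (t + 1) * ∏ ℓ ∈ Finset.Ioc t k, g ℓ x ∂π := by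
      rw [hA]
      refine integral_congr_ae (ae_of_all _ fun x => ?_)
      dsimp only
      have hsplit : Finset.Ioc t k = insert (t+1) (Finset.Ioc (t+1) k) := by
        ext a; simp only [Finset.mem_Ioc, Finset.mem_insert]; omega
      rw [hsplit, Finset.prod_insert (by simp), pow_succ]
      ring
    rw [h4, h2]
    exact h3
  -- descending chain
  have hchain : ∀ j, j ≤ k → (∫ x, f x ∂π) ^ (k + 1) ≤ A (k - j) := by
    intro j
    induction j with
    | zero => intro _; simpa using hbase
    | succ m ih =>
      intro hm
      have h1 := ih (by omega)
      have h2 : A (k - m) ≤ A (k - (m+1)) := by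
        have : k - m = (k - (m+1)) + 1 := by omega
        rw [this]
        exact hstep _ (by omega)
      exact le_trans h1 h2
  have hfinal := hchain k (le_refl k)
  rw [Nat.sub_self] at hfinal
  refine le_trans hfinal (le_of_eq ?_)
  rw [hA]
  refine integral_congr_ae (ae_of_all _ fun x => ?_)
  dsimp only
  have hg0 : g 0 x = f x := by
    rw [hg]
    dsimp only
    rw [hs0]
    simp [merge_zero]
  rw [hg0]
  ring

end PartI

end S19

namespace S19

lemma psiIdx_le (s : ℕ → ℕ) (k r : ℕ) : psiIdx s k r ≤ k := Nat.findGreatest_le k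

lemma psiIdx_spec (s : ℕ → ℕ) (k r : ℕ) (hs0 : s 0 = 0) : s (psiIdx s k r) ≤ r :=
  Nat.findGreatest_spec (P := fun i => s i ≤ r) (m := 0) (Nat.zero_le k)
    (by show s 0 ≤ r; rw [hs0]; exact Nat.zero_le r)

lemma psiIdx_ge (s : ℕ → ℕ) {k ℓ r : ℕ} (hℓ : ℓ ≤ k) (h : s ℓ ≤ r) : ℓ ≤ psiIdx s k r :=
  Nat.le_findGreatest hℓ h

lemma psiIdx_lt (s : ℕ → ℕ) {k ℓ r : ℕ} (hmono : ∀ i, i ≤ k → s i ≤ s (i + 1))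
    (hs0 : s 0 = 0) (hℓ : ℓ ≤ k + 1) (h : r < s ℓ) : psiIdx s k r < ℓ := by
  by_contra hc
  push_neg at hc
  have h1 : s ℓ ≤ s (psiIdx s k r) := smono hmono ℓ _ hc (by
    have := psiIdx_le s k r; omega)
  have h2 := psiIdx_spec s k r hs0
  omega

/-- The block (second) index read by `Ψ^ℓ` coordinate `r`, with padding. -/
def jval (s : ℕ → ℕ) (k ℓ r : ℕ) : ℕ :=
  if psiIdx s k r < ℓ then ℓ - psiIdx s k r
  else if ℓ = 0 then 0 else k - psiIdx s k r + ℓ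

lemma jval_le (s : ℕ → ℕ) {k ℓ : ℕ} (r : ℕ) (hℓ : ℓ ≤ k) : jval s k ℓ r ≤ k := by
  have := psiIdx_le s k r
  unfold jval
  split_ifs <;> omega

lemma jval_inj (s : ℕ → ℕ) {k : ℕ} (r : ℕ) {ℓ ℓ' : ℕ} (hℓ : ℓ ≤ k) (hℓ' : ℓ' ≤ k)
    (h : jval s k ℓ r = jval s k ℓ' r) : ℓ = ℓ' := by
  have := psiIdx_le s k r
  unfold jval at h
  split_ifs at h <;> omega

/-- The reading pattern. -/
def eFun (s : ℕ → ℕ) (k M : ℕ) (ℓ : Fin (k+1)) (r : Fin M) : Fin (k+1) × Fin (k+1) :=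
  (⟨psiIdx s k (r : ℕ), Nat.lt_succ_of_le (psiIdx_le s k (r : ℕ))⟩,
   ⟨jval s k (ℓ : ℕ) (r : ℕ), Nat.lt_succ_of_le (jval_le s (r : ℕ) (Nat.lt_succ_iff.1 ℓ.isLt))⟩)

lemma eFun_inj (s : ℕ → ℕ) (k M : ℕ) (r : Fin M) :
    Function.Injective fun ℓ : Fin (k+1) => eFun s k M ℓ r := by
  intro ℓ ℓ' h
  have h2 : jval s k (ℓ : ℕ) (r : ℕ) = jval s k (ℓ' : ℕ) (r : ℕ) := by
    have := congrArg (fun p => ((p.2 : Fin (k+1)) : ℕ)) h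
    simpa [eFun] using this
  exact Fin.ext (jval_inj s (r : ℕ) (Nat.lt_succ_iff.1 ℓ.isLt) (Nat.lt_succ_iff.1 ℓ'.isLt) h2)

/-- `Ψ^ℓ` in terms of `merge` and the reading map. -/
lemma psi_eq {Υ : Type u} (s : ℕ → ℕ) (k M : ℕ)
    (hmono : ∀ i, i ≤ k → s i ≤ s (i + 1)) (hs0 : s 0 = 0)
    (ω : Fin (k+1) × Fin (k+1) → Fin M → Υ) (ℓ : Fin (k+1)) :
    Psi s k M ω (ℓ : ℕ) =
      merge (s (ℓ : ℕ)) (fun r => ω (eFun s k M ℓ r) r)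
        (fun r => ω (eFun s k M 0 r) r) := by
  funext r
  have hik : psiIdx s k (r : ℕ) ≤ k := psiIdx_le s k (r : ℕ)
  have hℓk : (ℓ : ℕ) ≤ k := Nat.lt_succ_iff.1 ℓ.isLt
  rcases lt_or_ge (r : ℕ) (s (ℓ : ℕ)) with hcase | hcase
  · -- fresh region
    have hlt : psiIdx s k (r : ℕ) < (ℓ : ℕ) := psiIdx_lt s hmono hs0 (by omega) hcase
    have hmin1 : min (psiIdx s k (r : ℕ)) k = psiIdx s k (r : ℕ) := min_eq_left hik
    have hmin2 : min ((ℓ : ℕ) - psiIdx s k (r : ℕ)) k = (ℓ : ℕ) - psiIdx s k (r : ℕ) :=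
      min_eq_left (by omega)
    have hj : jval s k (ℓ : ℕ) (r : ℕ) = (ℓ : ℕ) - psiIdx s k (r : ℕ) := by
      unfold jval; rw [if_pos hlt]
    simp only [Psi, merge, eFun, if_pos hcase, hmin1, hmin2, hj]
  · -- shared region
    have hge : (ℓ : ℕ) ≤ psiIdx s k (r : ℕ) := psiIdx_ge s hℓk hcase
    have hmin1 : min (psiIdx s k (r : ℕ)) k = psiIdx s k (r : ℕ) := min_eq_left hik
    have hsub : (ℓ : ℕ) - psiIdx s k (r : ℕ) = 0 := Nat.sub_eq_zero_of_le hge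
    have hj0 : jval s k ((0 : Fin (k+1)) : ℕ) (r : ℕ) = 0 := by
      unfold jval
      simp
    have hnot : ¬ (r : ℕ) < s (ℓ : ℕ) := not_lt.2 hcase
    simp only [Psi, merge, eFun, if_neg hnot, hmin1, hsub, hj0]
    simp

/-- Product of independent coordinates over a constant-probability pi measure. -/
lemma prod_int {α : Type u} [MeasurableSpace α] (ρ : Measure α) [IsProbabilityMeasure ρ] :
    ∀ (n : ℕ) (H : Fin n → α → ℝ), (∀ j, Measurable (H j)) →
      (∀ j y, H j y ∈ Set.Icc (0:ℝ) 1) →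
      ∫ w, ∏ j, H j (w j) ∂(Measure.pi fun _ : Fin n => ρ) = ∏ j, ∫ y, H j y ∂ρ := by
  intro n
  induction n with
  | zero =>
    intro H _ _
    simp
  | succ n ih =>
    intro H hm hb
    set E := MeasurableEquiv.piFinSuccAbove (fun _ : Fin (n+1) => α) 0 with hE
    have hmp := measurePreserving_piFinSuccAbove (fun _ : Fin (n+1) => ρ) 0
    have hcomp := (hmp.symm E).integral_comp' (f := E.symm)
      (fun w => ∏ j, H j (w j))
    rw [← hcomp]
    have hpt : ∀ z : α × (Fin n → α),
        (∏ j, H j (E.symm z j)) = H 0 z.1 * ∏ j : Fin n, H j.succ (z.2 j) := by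
      rintro ⟨x, w⟩
      have hsymm : E.symm (x, w) = Fin.insertNth 0 x w := rfl
      rw [hsymm, Fin.insertNth_zero']
      rw [Fin.prod_univ_succ]
      simp [Fin.cons_succ, Fin.cons_zero]
    simp_rw [hpt]
    have hint : Integrable (fun z : α × (Fin n → α) => H 0 z.1 * ∏ j : Fin n, H j.succ (z.2 j))
        (ρ.prod (Measure.pi fun _ : Fin n => ρ)) := by
      refine int01 _ ?_ fun z => mem01_mul (hb 0 _) (mem01_prod _ _ fun j _ => hb _ _)
      exact ((hm 0).comp measurable_fst).mul
        (Finset.measurable_prod _ fun j _ =>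
          (hm j.succ).comp ((measurable_pi_apply j).comp measurable_snd))
    rw [MeasureTheory.integral_prod _ hint]
    have : ∀ x : α, ∫ w, H 0 x * ∏ j : Fin n, H j.succ (w j)
          ∂(Measure.pi fun _ : Fin n => ρ) =
        H 0 x * ∏ j : Fin n, ∫ y, H j.succ y ∂ρ := by
      intro x
      rw [integral_const_mul]
      rw [ih (fun j => H j.succ) (fun j => hm _) (fun j y => hb _ _)]
    simp_rw [this]
    rw [integral_mul_const, Fin.prod_univ_succ]

lemma partII {Υ : Type u} [MeasurableSpace Υ] (μ : Measure Υ) [IsProbabilityMeasure μ]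
    (k M : ℕ) (s : ℕ → ℕ) (hs0 : s 0 = 0) (hmono : ∀ i, i ≤ k → s i ≤ s (i + 1))
    (f : (Fin M → Υ) → ℝ) (hf : Measurable f) (hf01 : ∀ x, f x ∈ Set.Icc (0:ℝ) 1) :
    ∫ ω, ∏ ℓ ∈ Finset.range (k + 1), f (Psi s k M ω ℓ)
        ∂(Measure.pi fun _ : Fin (k + 1) × Fin (k + 1) => (Measure.pi fun _ : Fin M => μ)) =
      ∫ x, f x * ∏ ℓ ∈ Finset.Ioc 0 k,
          (∫ u, f (merge (s ℓ) u x) ∂(Measure.pi fun _ : Fin M => μ))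
        ∂(Measure.pi fun _ : Fin M => μ) := by
  classical
  set π : Measure (Fin M → Υ) := Measure.pi fun _ : Fin M => μ with hπ
  set Θ : (Fin (k+1) × Fin (k+1) → Fin M → Υ) → (Fin (k+1) → Fin M → Υ) :=
    fun ω ℓ r => ω (eFun s k M ℓ r) r with hΘdef
  have hΘ : MeasurePreserving Θ
      (Measure.pi fun _ : Fin (k+1) × Fin (k+1) => π)
      (Measure.pi fun _ : Fin (k+1) => π) :=
    mp_read μ (eFun s k M) (eFun_inj s k M)
  set F : (Fin (k+1) → Fin M → Υ) → ℝ :=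
    fun y => ∏ ℓ : Fin (k+1), f (merge (s (ℓ : ℕ)) (y ℓ) (y 0)) with hF
  have hFm : Measurable F := by
    refine Finset.measurable_prod _ fun ℓ _ => ?_
    have hpair : Measurable fun y : Fin (k+1) → Fin M → Υ => (y ℓ, y 0) :=
      (measurable_pi_apply ℓ).prodMk (measurable_pi_apply 0)
    exact hf.comp ((measurable_merge (s (ℓ : ℕ))).comp hpair)
  -- step 1: rewrite integrand
  have hstep1 : ∀ ω, ∏ ℓ ∈ Finset.range (k + 1), f (Psi s k M ω ℓ) = F (Θ ω) := by
    intro ω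
    rw [hF]
    dsimp only
    rw [← Fin.prod_univ_eq_prod_range (fun ℓ => f (Psi s k M ω ℓ)) (k+1)]
    refine Finset.prod_congr rfl fun ℓ _ => ?_
    rw [psi_eq s k M hmono hs0 ω ℓ]
  simp_rw [hstep1]
  -- step 2: push through Θ
  have h2 := integral_map (φ := Θ) hΘ.measurable.aemeasurable
    (hFm.aestronglyMeasurable (μ := Measure.map Θ (Measure.pi fun _ : Fin (k+1) × Fin (k+1) => π)))
  rw [hΘ.map_eq] at h2
  rw [← h2]
  -- step 3: split off coordinate 0
  set E := MeasurableEquiv.piFinSuccAbove (fun _ : Fin (k+1) => (Fin M → Υ)) 0 with hE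
  have hmp := measurePreserving_piFinSuccAbove (fun _ : Fin (k+1) => π) 0
  have hcomp := (hmp.symm E).integral_comp' (f := E.symm) F
  rw [← hcomp]
  have hpt : ∀ z : (Fin M → Υ) × (Fin k → Fin M → Υ),
      F (E.symm z) = f z.1 * ∏ j : Fin k, f (merge (s ((j : ℕ) + 1)) (z.2 j) z.1) := by
    rintro ⟨x, w⟩
    have hsymm : E.symm (x, w) = Fin.insertNth 0 x w := rfl
    rw [hF]
    dsimp only
    rw [hsymm, Fin.insertNth_zero']
    rw [Fin.prod_univ_succ]
    congr 1
    rw [Fin.cons_zero]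
    rw [show ((0 : Fin (k+1)) : ℕ) = 0 from rfl, hs0, merge_zero]
  simp_rw [hpt]
  -- step 4: Fubini
  have hint : Integrable (fun z : (Fin M → Υ) × (Fin k → Fin M → Υ) =>
      f z.1 * ∏ j : Fin k, f (merge (s ((j : ℕ) + 1)) (z.2 j) z.1))
      (π.prod (Measure.pi fun _ : Fin k => π)) := by
    refine int01 _ ?_ fun z => mem01_mul (hf01 _) (mem01_prod _ _ fun j _ => hf01 _)
    refine (hf.comp measurable_fst).mul (Finset.measurable_prod _ fun j _ => ?_)
    have hpair : Measurable fun z : (Fin M → Υ) × (Fin k → Fin M → Υ) => (z.2 j, z.1) :=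
      ((measurable_pi_apply j).comp measurable_snd).prodMk measurable_fst
    exact hf.comp ((measurable_merge (s ((j : ℕ) + 1))).comp hpair)
  rw [MeasureTheory.integral_prod _ hint]
  -- step 5: inner integral factorizes
  refine integral_congr_ae (ae_of_all _ fun x => ?_)
  dsimp only
  rw [integral_const_mul]
  congr 1
  rw [prod_int π k (fun j u => f (merge (s ((j : ℕ) + 1)) u x))
    (fun j => hf.comp ((measurable_merge _).comp (measurable_id.prodMk measurable_const)))
    (fun j u => hf01 _)]
  -- step 6: reindex the product
  rw [Fin.prod_univ_eq_prod_range (fun j => ∫ u, f (merge (s (j + 1)) u x) ∂π) k]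
  refine Finset.prod_nbij' (fun j => j + 1) (fun ℓ => ℓ - 1) ?_ ?_ ?_ ?_ ?_
  · intro a ha
    simp only [Finset.mem_range] at ha
    simp only [Finset.mem_Ioc]
    omega
  · intro a ha
    simp only [Finset.mem_Ioc] at ha
    simp only [Finset.mem_range]
    omega
  · intro a ha
    omega
  · intro a ha
    simp only [Finset.mem_Ioc] at ha
    omega
  · intro a ha
    dsimp only

theorem statement19' {Υ : Type u} [MeasurableSpace Υ] (μ : Measure Υ) [IsProbabilityMeasure μ]
    (k M : ℕ) (hk : 0 < k) (hM : 0 < M) (s : ℕ → ℕ)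
    (hs0 : s 0 = 0) (hmono : ∀ i, i ≤ k → s i ≤ s (i + 1)) (hsk : s (k + 1) = M)
    (f : (Fin M → Υ) → ℝ) (hf : Measurable f) (hf01 : ∀ x, f x ∈ Set.Icc (0:ℝ) 1) :
    (∫ x, f x ∂(Measure.pi fun _ : Fin M => μ)) ^ (k + 1) ≤
      ∫ ω, ∏ ℓ ∈ Finset.range (k + 1), f (Psi s k M ω ℓ)
        ∂(Measure.pi fun _ : Fin (k + 1) × Fin (k + 1) =>
            (Measure.pi fun _ : Fin M => μ)) := by
  rw [partII μ k M s hs0 hmono f hf hf01]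
  exact partI μ k s hs0 hmono hf hf01

end S19


theorem statement19 {Υ : Type u} [MeasurableSpace Υ] (μ : Measure Υ) [IsProbabilityMeasure μ]
    (k M : ℕ) (hk : 0 < k) (hM : 0 < M) (s : ℕ → ℕ)
    (hs0 : s 0 = 0) (hmono : ∀ i, i ≤ k → s i ≤ s (i + 1)) (hsk : s (k + 1) = M)
    (f : (Fin M → Υ) → ℝ) (hf : Measurable f) (hf01 : ∀ x, f x ∈ Set.Icc (0:ℝ) 1) :
    (∫ x, f x ∂(Measure.pi fun _ : Fin M => μ)) ^ (k + 1) ≤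
      ∫ ω, ∏ ℓ ∈ Finset.range (k + 1), f (Psi s k M ω ℓ)
        ∂(Measure.pi fun _ : Fin (k + 1) × Fin (k + 1) =>
            (Measure.pi fun _ : Fin M => μ)) :=
  S19.statement19' μ k M hk hM s hs0 hmono hsk f hf hf01
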